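/- The matrix J2 is invertible and the (0,0) entry ((J2)^{-1} e_0, e_0) of its inverse is a real number t with 0 < t ≤ 1. -/

import Mathlib

open Matrix

noncomputable def Umat (n : ℕ) (b : Fin (n + 1) → ℝ) :
    Matrix (Fin (n + 1)) (Fin (n + 2)) ℝ :=
  Matrix.of fun i k =>
    if (k : ℕ) = (i : ℕ) then 1 else if (k : ℕ) = (i : ℕ) + 1 then b i else 0

lemma hU (n : ℕ) (b : Fin (n + 1) → ℝ) (i : Fin (n+1)) (k : Fin (n+2)) :
    Umat n b i k = (if (k : ℕ) = (i : ℕ) then 1 else 0)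
      + (if (k : ℕ) = (i : ℕ) + 1 then b i else 0) := by
  simp only [Umat, Matrix.of_apply]
  split_ifs <;> first | (exfalso; first | omega | assumption) | ring

lemma sum_ite_val {m : ℕ} (c : ℕ) (g : Fin m → ℝ) :
    (∑ i : Fin m, if (i : ℕ) = c then g i else 0)
      = if h : c < m then g ⟨c, h⟩ else 0 := by
  split_ifs with h
  · rw [Finset.sum_eq_single (⟨c, h⟩ : Fin m)]
    · simp
    · intro i _ hne
      rw [if_neg]
      intro hc
      exact hne (Fin.ext hc)
    · simp
  · apply Finset.sum_eq_zero
    intro i _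
    rw [if_neg]
    intro hc
    exact h (hc ▸ i.isLt)

lemma iteMulIte {c₁ c₂ : ℕ} (x y : ℝ) (k : ℕ) :
    (if k = c₁ then x else 0) * (if k = c₂ then y else 0)
      = if k = c₁ then (if c₂ = c₁ then x * y else 0) else 0 := by
  split_ifs <;> first | (exfalso; first | omega | assumption) | ring

lemma mulU (n : ℕ) (b : Fin (n + 1) → ℝ) (i j : Fin (n+1)) :
    (Umat n b * (Umat n b)ᵀ) i j =
      (if (j : ℕ) = (i : ℕ) then (1:ℝ) else 0)
      + (if (j : ℕ) + 1 = (i : ℕ) then b j else 0)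
      + (if (j : ℕ) = (i : ℕ) + 1 then b i else 0)
      + (if (j : ℕ) = (i : ℕ) then b i * b j else 0) := by
  simp only [Matrix.mul_apply, Matrix.transpose_apply, hU, add_mul, mul_add,
    Finset.sum_add_distrib, iteMulIte, sum_ite_val]
  have h1 : (i : ℕ) < n + 2 := by omega
  have h2 : (i : ℕ) + 1 < n + 2 := by omega
  rw [dif_pos h1, dif_pos h2]
  split_ifs <;> first | (exfalso; first | omega | assumption) | ring

/-- The `(n+1)×(n+1)` symmetric tridiagonal matrix with diagonal entries
`1 + b_j²` and subdiagonal and superdiagonal entries `b_0, …, b_{n-1}`, viewed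
as a complex matrix. -/
noncomputable def J2mat (n : ℕ) (b : Fin (n + 1) → ℝ) :
    Matrix (Fin (n + 1)) (Fin (n + 1)) ℂ :=
  Matrix.of fun i j =>
    if i = j then ((1 + b i ^ 2 : ℝ) : ℂ)
    else if (i : ℕ) + 1 = (j : ℕ) then ((b i : ℝ) : ℂ)
    else if (j : ℕ) + 1 = (i : ℕ) then ((b j : ℝ) : ℂ)
    else 0

lemma J2_eq (n : ℕ) (b : Fin (n + 1) → ℝ) :
    J2mat n b = (Umat n b * (Umat n b)ᵀ).map Complex.ofRealHom := by
  ext i j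
  rw [Matrix.map_apply, mulU]
  simp only [J2mat, Matrix.of_apply, Complex.ofRealHom_eq_coe]
  by_cases hij : i = j
  · subst hij
    rw [if_pos rfl, if_pos rfl, if_neg (by omega), if_neg (by omega), if_pos rfl]
    push_cast; ring
  · have hv : (i : ℕ) ≠ (j : ℕ) := fun h => hij (Fin.ext h)
    rw [if_neg hij]
    split_ifs <;> first | (exfalso; omega) | (push_cast; ring)

lemma Uinj (n : ℕ) (b : Fin (n + 1) → ℝ) (x : Fin (n + 1) → ℝ)
    (hv : (Umat n b)ᵀ *ᵥ x = 0) : x = 0 := by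
  have key : ∀ m : ℕ, ∀ h : m < n + 1, x ⟨m, h⟩ = 0 := by
    intro m
    induction m using Nat.strong_induction_on with
    | _ m ih =>
      intro h
      match m with
      | 0 =>
        have h0 := congrFun hv ⟨0, by omega⟩
        have hs : ∀ i : Fin (n+1), (Umat n b)ᵀ (⟨0, by omega⟩ : Fin (n+2)) i * x i
            = if (i : ℕ) = 0 then x i else 0 := by
          intro i
          simp only [Matrix.transpose_apply, Umat, Matrix.of_apply]
          split_ifs <;> first | (exfalso; first | omega | assumption) | ring
        rw [Matrix.mulVec, Pi.zero_apply] at h0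
        rw [show (dotProduct ((Umat n b)ᵀ ⟨0, by omega⟩) x)
            = ∑ i : Fin (n+1), (Umat n b)ᵀ (⟨0, by omega⟩ : Fin (n+2)) i * x i from rfl,
          Finset.sum_congr rfl (fun i _ => hs i), sum_ite_val, dif_pos (by omega : 0 < n+1)] at h0
        exact h0
      | m' + 1 =>
        have h0 := congrFun hv ⟨m' + 1, by omega⟩
        have hs : ∀ i : Fin (n+1), (Umat n b)ᵀ (⟨m'+1, by omega⟩ : Fin (n+2)) i * x i
            = (if (i : ℕ) = m' + 1 then x i else 0)
              + (if (i : ℕ) = m' then b i * x i else 0) := by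
          intro i
          simp only [Matrix.transpose_apply, Umat, Matrix.of_apply]
          split_ifs <;> first | (exfalso; first | omega | assumption) | ring
        rw [Matrix.mulVec, Pi.zero_apply] at h0
        rw [show (dotProduct ((Umat n b)ᵀ ⟨m'+1, by omega⟩) x)
            = ∑ i : Fin (n+1), (Umat n b)ᵀ (⟨m'+1, by omega⟩ : Fin (n+2)) i * x i from rfl,
          Finset.sum_congr rfl (fun i _ => hs i), Finset.sum_add_distrib,
          sum_ite_val, sum_ite_val, dif_pos h, dif_pos (by omega : m' < n+1)] at h0
        rw [ih m' (by omega) (by omega)] at h0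
        simpa using h0
  funext j
  have := key j.val j.isLt
  simpa using this

lemma quad (n : ℕ) (b : Fin (n + 1) → ℝ) (x : Fin (n+1) → ℝ) :
    x ⬝ᵥ ((Umat n b * (Umat n b)ᵀ) *ᵥ x)
      = ((Umat n b)ᵀ *ᵥ x) ⬝ᵥ ((Umat n b)ᵀ *ᵥ x) := by
  rw [← Matrix.mulVec_mulVec, Matrix.dotProduct_mulVec, ← Matrix.mulVec_transpose]

lemma Mpos (n : ℕ) (b : Fin (n + 1) → ℝ) : (Umat n b * (Umat n b)ᵀ).PosDef := by
  refine Matrix.PosDef.of_dotProduct_mulVec_pos ?_ ?_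
  · have h : (Umat n b)ᴴ = (Umat n b)ᵀ := by
      ext i j
      simp [Matrix.conjTranspose_apply]
    rw [← h]
    exact Matrix.isHermitian_mul_conjTranspose_self _
  · intro x hx
    have hsx : star x = x := by simp
    rw [hsx, quad]
    set v := (Umat n b)ᵀ *ᵥ x with hv
    have hvne : v ≠ 0 := fun h => hx (Uinj n b x h)
    have h1 : 0 ≤ v ⬝ᵥ v := Finset.sum_nonneg fun i _ => mul_self_nonneg _
    rcases h1.lt_or_eq with h | h
    · exact h
    · exact absurd (dotProduct_self_eq_zero.mp h.symm) hvne

lemma v_zero (n : ℕ) (b : Fin (n + 1) → ℝ) (x : Fin (n+1) → ℝ) :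
    ((Umat n b)ᵀ *ᵥ x) 0 = x 0 := by
  have hs : ∀ i : Fin (n+1), (Umat n b)ᵀ (0 : Fin (n+2)) i * x i
      = if (i : ℕ) = 0 then x i else 0 := by
    intro i
    simp only [Matrix.transpose_apply, Umat, Matrix.of_apply, Fin.val_zero]
    split_ifs <;> first | (exfalso; first | omega | assumption) | ring
  rw [show (((Umat n b)ᵀ *ᵥ x) 0)
      = ∑ i : Fin (n+1), (Umat n b)ᵀ (0 : Fin (n+2)) i * x i from rfl,
    Finset.sum_congr rfl (fun i _ => hs i), sum_ite_val, dif_pos (by omega : 0 < n+1)]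
  congr 1

lemma bound (n : ℕ) (b : Fin (n + 1) → ℝ) (x : Fin (n+1) → ℝ) :
    x 0 * x 0 ≤ x ⬝ᵥ ((Umat n b * (Umat n b)ᵀ) *ᵥ x) := by
  rw [quad]
  set v := (Umat n b)ᵀ *ᵥ x with hv
  have h0 : v 0 = x 0 := v_zero n b x
  calc x 0 * x 0 = v 0 * v 0 := by rw [h0]
    _ ≤ ∑ k : Fin (n+2), v k * v k :=
        Finset.single_le_sum (fun k _ => mul_self_nonneg (v k)) (Finset.mem_univ 0)
    _ = v ⬝ᵥ v := rfl

/-- `J2` is invertible and the `(0,0)` entry of its inverse is a real number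
lying in `(0, 1]`. -/
theorem stmt16 (n : ℕ) (b : Fin (n + 1) → ℝ) (hb : ∀ j, 0 < b j) :
    IsUnit (J2mat n b).det ∧
      ∃ t : ℝ, (J2mat n b)⁻¹ 0 0 = (t : ℂ) ∧ 0 < t ∧ t ≤ 1 := by
  set M := Umat n b * (Umat n b)ᵀ with hM
  have hpd : M.PosDef := Mpos n b
  have hdetM : IsUnit M.det := hpd.det_pos.ne'.isUnit
  have hmap : J2mat n b = M.map Complex.ofRealHom := J2_eq n b
  have hdet : IsUnit (J2mat n b).det := by
    rw [hmap]
    have hd : (M.map Complex.ofRealHom).det = Complex.ofRealHom M.det :=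
      (RingHom.map_det Complex.ofRealHom M).symm
    rw [hd]
    exact hdetM.map Complex.ofRealHom
  have hinv : (J2mat n b)⁻¹ = M⁻¹.map Complex.ofRealHom := by
    rw [hmap]
    apply Matrix.inv_eq_right_inv
    rw [← Matrix.map_mul, Matrix.mul_nonsing_inv _ hdetM]
    exact Matrix.map_one _ (map_zero _) (map_one _)
  have hMinv : M * M⁻¹ = 1 := Matrix.mul_nonsing_inv _ hdetM
  set e0 : Fin (n + 1) → ℝ := Pi.single 0 1 with he0
  set x : Fin (n + 1) → ℝ := M⁻¹ *ᵥ e0 with hx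
  have hx0 : x 0 = M⁻¹ 0 0 := by
    simp [hx, he0, Matrix.mulVec_single]
  have ht_pos : 0 < M⁻¹ 0 0 := by
    have h := hpd.inv.dotProduct_mulVec_pos (x := e0) (by
      simp only [he0, ne_eq]
      intro h
      have := congrFun h 0
      simp at this)
    have hse : star e0 = e0 := by simp
    rw [hse] at h
    have hcalc : e0 ⬝ᵥ (M⁻¹ *ᵥ e0) = M⁻¹ 0 0 := by
      simp [he0, Matrix.mulVec_single, dotProduct, Pi.single_apply]
    rwa [hcalc] at h
  have hMx : M *ᵥ x = e0 := by
    rw [hx, Matrix.mulVec_mulVec, hMinv, Matrix.one_mulVec]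
  have hq : x ⬝ᵥ (M *ᵥ x) = M⁻¹ 0 0 := by
    rw [hMx, he0, dotProduct_single, mul_one]
    exact hx0
  have hle := bound n b x
  rw [← hM, hq, hx0] at hle
  refine ⟨hdet, M⁻¹ 0 0, ?_, ht_pos, ?_⟩
  · rw [hinv]
    rfl
  · nlinarith [ht_pos, hle]
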